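/- Let $q$ be a power of an odd prime, $n$ a positive integer, $\mathcal{B} = \{\beta_1, \dots, \beta_n\}$ a basis of $\mathbb{F}_{q^n}$ over $\mathbb{F}_q$, and let $G$ be the $n \times n$ matrix over $\mathbb{F}_q$ with entries $G_{jk} = \mathrm{Tr}_{\mathbb{F}_{q^n}/\mathbb{F}_q}(\beta_j \beta_k)$. Let $\chi$ be the quadratic character of $\mathbb{F}_q^*$. Then $\chi(\det G) = 1$ if $n$ is odd and $\chi(\det G) = -1$ if $n$ is even. -/

import Mathlib

open Polynomial Matrix



-- root counting: if all elements satisfy x^k = x then card ≤ k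
lemma aux_count {F : Type*} [Field F] [Fintype F] (k : ℕ) (hk : 2 ≤ k)
    (h : ∀ x : F, x ^ k = x) : Fintype.card F ≤ k := by
  classical
  have hd : (X ^ k - X : F[X]).natDegree = k := by
    rw [natDegree_sub_eq_left_of_natDegree_lt, natDegree_X_pow]
    rw [natDegree_X, natDegree_X_pow]; omega
  have hP : (X ^ k - X : F[X]) ≠ 0 := fun h0 => by
    rw [h0, natDegree_zero] at hd; omega
  have hsub : (Finset.univ : Finset F) ⊆ (X ^ k - X : F[X]).roots.toFinset := by
    intro x _
    rw [Multiset.mem_toFinset, mem_roots hP]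
    simp [Polynomial.IsRoot, h x, sub_eq_zero]
  calc Fintype.card F = (Finset.univ : Finset F).card := rfl
    _ ≤ (X ^ k - X : F[X]).roots.toFinset.card := Finset.card_le_card hsub
    _ ≤ Multiset.card (X ^ k - X : F[X]).roots := Multiset.toFinset_card_le _
    _ ≤ (X ^ k - X : F[X]).natDegree := card_roots' _
    _ = k := hd

lemma aux_fix {Fq F : Type*} [Field Fq] [Field F] [Fintype Fq] [Algebra Fq F] (k : ℕ)
    (hk : 2 ≤ k) (hcard : Fintype.card Fq = k) (x : F) (hx : x ^ k = x) :
    ∃ c : Fq, algebraMap Fq F c = x := by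
  classical
  by_contra hno
  push_neg at hno
  have hd : (X ^ k - X : F[X]).natDegree = k := by
    rw [natDegree_sub_eq_left_of_natDegree_lt, natDegree_X_pow]
    rw [natDegree_X, natDegree_X_pow]; omega
  have hP : (X ^ k - X : F[X]) ≠ 0 := fun h0 => by
    rw [h0, natDegree_zero] at hd; omega
  set S : Finset F := insert x (Finset.univ.image (algebraMap Fq F)) with hS
  have hroot : S ⊆ (X ^ k - X : F[X]).roots.toFinset := by
    intro y hy
    rw [Multiset.mem_toFinset, mem_roots hP]
    have hyk : y ^ k = y := by
      rcases Finset.mem_insert.mp hy with rfl | hy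
      · exact hx
      · obtain ⟨c, _, rfl⟩ := Finset.mem_image.mp hy
        rw [← map_pow, ← hcard, FiniteField.pow_card]
    simp [Polynomial.IsRoot, hyk, sub_eq_zero]
  have hxni : x ∉ Finset.univ.image (algebraMap Fq F) := by
    intro hmem
    obtain ⟨c, _, hc⟩ := Finset.mem_image.mp hmem
    exact hno c hc
  have hScard : S.card = k + 1 := by
    rw [hS, Finset.card_insert_of_notMem hxni,
      Finset.card_image_of_injective _ (algebraMap Fq F).injective, Finset.card_univ, hcard]
  have h1 : S.card ≤ (X ^ k - X : F[X]).roots.toFinset.card := Finset.card_le_card hroot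
  have h2 := Multiset.toFinset_card_le (X ^ k - X : F[X]).roots
  have h3 := card_roots' (X ^ k - X : F[X])
  omega

theorem stmt_8 (p s n q : ℕ) (hp : p.Prime) (hodd : p ≠ 2) (hs : 0 < s)
    (hq : q = p ^ s) (hn : 0 < n)
    (Fq F : Type*) [Field Fq] [Field F] [Fintype Fq] [DecidableEq Fq] [Algebra Fq F]
    (hcardq : Fintype.card Fq = q) (hrank : Module.finrank Fq F = n)
    (b : Module.Basis (Fin n) Fq F)
    (G : Matrix (Fin n) (Fin n) Fq)
    (hG : ∀ j k : Fin n, G j k = Algebra.trace Fq F (b j * b k)) :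
    quadraticChar Fq G.det = if Odd n then 1 else -1 := by
  haveI : Fact p.Prime := ⟨hp⟩
  have hq2 : 2 ≤ q := by
    subst hq
    calc 2 ≤ p := hp.two_le
    _ ≤ p ^ s := Nat.le_self_pow hs.ne' p
  have hqodd : Odd q := by subst hq; exact (hp.odd_of_ne_two hodd).pow
  haveI : Module.Finite Fq F := Module.Finite.of_basis b
  haveI : Finite F := Module.finite_of_finite Fq
  haveI : Fintype F := Fintype.ofFinite F
  -- characteristic
  haveI hcharFq : CharP Fq p := by
    obtain ⟨r, hr⟩ := CharP.exists Fq
    haveI := hr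
    have hrp : r.Prime := CharP.char_is_prime Fq r
    obtain ⟨t, ht⟩ := FiniteField.card Fq r
    have hdvd : p ∣ r ^ (t : ℕ) := by
      rw [← ht.2, hcardq, hq]
      exact dvd_pow_self p hs.ne'
    have : p = r := ((Nat.prime_dvd_prime_iff_eq hp hrp).mp (hp.dvd_of_dvd_pow hdvd))
    rwa [this]
  haveI hcharF : CharP F p := charP_of_injective_algebraMap (algebraMap Fq F).injective p
  haveI : ExpChar F p := ExpChar.prime hp
  have hcardF : Fintype.card F = q ^ n := by
    rw [Module.card_eq_pow_finrank (K := Fq) (V := F), hcardq, hrank]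
  -- Frobenius
  let fr : F →ₐ[Fq] F :=
    { toRingHom := iterateFrobenius F p s
      commutes' := fun c => by
        show iterateFrobenius F p s (algebraMap Fq F c) = algebraMap Fq F c
        rw [iterateFrobenius_def, ← map_pow, ← hq, ← hcardq, FiniteField.pow_card] }
  have frbij : Function.Bijective fr := Finite.injective_iff_bijective.mp fr.toRingHom.injective
  let φ : F ≃ₐ[Fq] F := AlgEquiv.ofBijective fr frbij
  have hφ : ∀ x : F, φ x = x ^ q := fun x => by
    show iterateFrobenius F p s x = x ^ q
    rw [iterateFrobenius_def, hq]
  have hφpow : ∀ (i : ℕ) (x : F), (φ ^ i) x = x ^ q ^ i := by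
    intro i
    induction i with
    | zero => intro x; simp
    | succ i ih =>
      intro x
      rw [pow_succ, AlgEquiv.mul_apply, ih, hφ, ← pow_mul, ← pow_succ']
  have hcardG : Fintype.card (F ≃ₐ[Fq] F) = n := by
    rw [← Nat.card_eq_fintype_card, IsGalois.card_aut_eq_finrank, hrank]
  have hφn : φ ^ n = 1 := by
    ext x
    rw [hφpow, AlgEquiv.one_apply, ← hcardF, FiniteField.pow_card]
  have hord : orderOf φ = n := by
    have hdvd : orderOf φ ∣ n := orderOf_dvd_of_pow_eq_one hφn
    have hpos : 0 < orderOf φ := orderOf_pos φ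
    by_contra hne
    have hlt : orderOf φ < n := lt_of_le_of_ne (Nat.le_of_dvd hn hdvd) hne
    have hfix : ∀ x : F, x ^ q ^ orderOf φ = x := fun x => by
      rw [← hφpow, pow_orderOf_eq_one, AlgEquiv.one_apply]
    have hle := aux_count (q ^ orderOf φ) (le_trans hq2 (Nat.le_self_pow hpos.ne' q)) hfix
    rw [hcardF] at hle
    exact absurd ((Nat.pow_le_pow_iff_right hq2).mp hle) (by omega)
  have hinj : Function.Injective (fun i : Fin n => φ ^ (i : ℕ)) := by
    intro i j hij
    exact Fin.ext (pow_injOn_Iio_orderOf (by rw [hord]; exact i.isLt)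
      (by rw [hord]; exact j.isLt) hij)
  have hbij : Function.Bijective (fun i : Fin n => φ ^ (i : ℕ)) :=
    (Fintype.bijective_iff_injective_and_card _).mpr ⟨hinj, by rw [Fintype.card_fin, hcardG]⟩
  have htr : ∀ x : F, algebraMap Fq F (Algebra.trace Fq F x) = ∑ i : Fin n, x ^ q ^ (i : ℕ) := by
    intro x
    rw [trace_eq_sum_automorphisms x, ← Equiv.sum_comp (Equiv.ofBijective _ hbij)
      (fun σ : F ≃ₐ[Fq] F => σ x)]
    exact Finset.sum_congr rfl fun i _ => hφpow (i : ℕ) x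
  -- matrix part
  obtain ⟨m, rfl⟩ : ∃ m, n = m + 1 := ⟨n - 1, (Nat.succ_pred_eq_of_pos hn).symm⟩
  set B : Matrix (Fin (m+1)) (Fin (m+1)) F :=
    Matrix.of (fun j k => b j ^ q ^ (k : ℕ)) with hBdef
  have hmap : G.map (algebraMap Fq F) = B * Bᵀ := by
    ext j k
    rw [Matrix.map_apply, hG, htr, Matrix.mul_apply]
    refine Finset.sum_congr rfl fun i _ => ?_
    simp [hBdef, Matrix.transpose_apply, mul_pow]
  have hdet2 : algebraMap Fq F G.det = B.det ^ 2 := by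
    rw [RingHom.map_det, RingHom.mapMatrix_apply, hmap, det_mul, det_transpose, ← sq]
  have hGtm : G = Algebra.traceMatrix Fq ⇑b := by
    ext j k
    rw [hG, Algebra.traceMatrix_apply, Algebra.traceForm_apply]
  have hGdet0 : G.det ≠ 0 := by
    rw [hGtm]
    exact fun h => Algebra.discr_not_zero_of_basis Fq b (by rwa [Algebra.discr_def])
  have hBdet0 : B.det ≠ 0 := by
    intro h
    apply hGdet0
    have h0 : algebraMap Fq F G.det = 0 := by rw [hdet2, h]; ring
    exact (_root_.map_eq_zero (algebraMap Fq F)).mp h0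
  have hBq : B.det ^ q = (-1 : F) ^ m * B.det := by
    have h1 : B.det ^ q = (B.map (iterateFrobenius F p s)).det := by
      have h := (iterateFrobenius F p s).map_det B
      rw [iterateFrobenius_def] at h
      rw [hq]; exact h
    have h2 : B.map (iterateFrobenius F p s) = B.submatrix id (finRotate (m+1)) := by
      ext j k
      have hval : ((finRotate (m+1) k : ℕ)) = ((k : ℕ) + 1) % (m+1) := by
        rw [finRotate_succ_apply, Fin.val_add, Fin.val_one']
        conv_rhs => rw [Nat.add_mod]
        rw [Nat.mod_eq_of_lt k.isLt]
      calc (B.map (iterateFrobenius F p s)) j k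
          = (b j ^ q ^ (k : ℕ)) ^ p ^ s := by
            rw [Matrix.map_apply, iterateFrobenius_def]; rfl
        _ = b j ^ q ^ ((k : ℕ) + 1) := by rw [← hq, ← pow_mul, ← pow_succ]
        _ = (φ ^ ((k : ℕ) + 1)) (b j) := (hφpow _ _).symm
        _ = (φ ^ (((k : ℕ) + 1) % (m+1))) (b j) := by
            have h := pow_mod_orderOf (x := φ) (n := (k : ℕ) + 1)
            rw [hord] at h
            rw [h]
        _ = b j ^ q ^ (((k : ℕ) + 1) % (m+1)) := hφpow _ _
        _ = B.submatrix id (finRotate (m+1)) j k := by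
            rw [Matrix.submatrix_apply, id_eq, hBdef, Matrix.of_apply, hval]
    rw [h1, h2, Matrix.det_permute', sign_finRotate]
    push_cast
    ring
  rcases Nat.even_or_odd m with hm | hm
  · -- m even, n = m+1 odd
    rw [if_pos (Even.add_one hm)]
    have hfixd : B.det ^ q = B.det := by rw [hBq, hm.neg_one_pow, one_mul]
    obtain ⟨c, hc⟩ := aux_fix q hq2 hcardq B.det hfixd
    have hsq : G.det = c * c := by
      apply (algebraMap Fq F).injective
      rw [_root_.map_mul, hc, hdet2, sq]
    exact (quadraticChar_one_iff_isSquare hGdet0).mpr ⟨c, hsq⟩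
  · -- m odd, n = m+1 even
    rw [if_neg (fun h => (Nat.odd_add_one.mp h) hm)]
    rw [quadraticChar_neg_one_iff_not_isSquare]
    rintro ⟨c, hc⟩
    have hneg : B.det ^ q = -B.det := by rw [hBq, hm.neg_one_pow, neg_one_mul]
    set y := algebraMap Fq F c with hy
    have hyq : y ^ q = y := by rw [hy, ← map_pow, ← hcardq, FiniteField.pow_card]
    have hsq : B.det * B.det = y * y := by
      rw [← sq, ← hdet2, hc, _root_.map_mul, ← hy]
    have hfixd : B.det ^ q = B.det := by
      rcases mul_self_eq_mul_self_iff.mp hsq with h | h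
      · rw [h, hyq]
      · rw [h, hqodd.neg_pow, hyq]
    have h2 : B.det = -B.det := hfixd.symm.trans hneg
    have h20 : (2 : F) ≠ 0 := by
      intro h0
      rw [show (2 : F) = ((2 : ℕ) : F) by norm_num, CharP.cast_eq_zero_iff F p 2] at h0
      exact hodd ((Nat.prime_dvd_prime_iff_eq hp Nat.prime_two).mp h0)
    have hB0 : B.det = 0 := by
      rcases mul_eq_zero.mp
        (show (2 : F) * B.det = 0 by rw [two_mul]; exact eq_neg_iff_add_eq_zero.mp h2) with h | h
      · exact absurd h h20
      · exact h
    exact hBdet0 hB0
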